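/- Let n ≥ 1, let α̃ ∈ ℂ ∖ ℝ, and set α := e^{2π√−1·α̃}. Let ℤ act on ℂⁿ ∖ {0} by k·z := α^k z, and let the additive group ℂ act on (ℂⁿ ∖ {0}) × ℂ^* by t·(z, w) := (e^{2π√−1·α̃ t} z, e^{2π√−1·t} w). Then the map sending the class of z to the class of (z, 1) is a well-defined homeomorphism from the quotient space (ℂⁿ ∖ {0})/ℤ (a Hopf manifold) onto the quotient space ((ℂⁿ ∖ {0}) × ℂ^*)/ℂ, both equipped with their quotient topologies. -/
import Mathlib


open scoped Real

/-- `ℂⁿ ∖ {0}`. -/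
def HopfTotal (n : ℕ) : Type := {z : EuclideanSpace ℂ (Fin n) // z ≠ 0}

noncomputable instance (n : ℕ) : TopologicalSpace (HopfTotal n) :=
  instTopologicalSpaceSubtype

/-- The orbit relation of the `ℤ`-action `k · z = α^k z` on `ℂⁿ ∖ {0}`. -/
def hopfRel (n : ℕ) (α : ℂ) (z w : HopfTotal n) : Prop :=
  ∃ k : ℤ, w.val = (α ^ k) • z.val

/-- `(ℂⁿ ∖ {0}) × ℂ^*`. -/
def CEStotal (n : ℕ) : Type :=
  {p : EuclideanSpace ℂ (Fin n) × ℂ // p.1 ≠ 0 ∧ p.2 ≠ 0}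

noncomputable instance (n : ℕ) : TopologicalSpace (CEStotal n) :=
  instTopologicalSpaceSubtype

/-- The orbit relation of the action `t · (z, w) = (e^{2π√−1 α̃ t} z, e^{2π√−1 t} w)` of
the additive group `ℂ` on `(ℂⁿ ∖ {0}) × ℂ^*`. -/
def CESrel (n : ℕ) (α' : ℂ) (p q : CEStotal n) : Prop :=
  ∃ t : ℂ,
    q.val.1 = Complex.exp (2 * (π : ℂ) * Complex.I * α' * t) • p.val.1 ∧
    q.val.2 = Complex.exp (2 * (π : ℂ) * Complex.I * t) * p.val.2

namespace HopfCEAux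

variable {n : ℕ}

/-- Representative map for the inverse, using a logarithm branch `L`. -/
noncomputable def gFun (α' : ℂ) (L : ℂ → ℂ) (p : CEStotal n) : HopfTotal n :=
  ⟨Complex.exp (-(α' * L p.val.2)) • p.val.1,
    smul_ne_zero (Complex.exp_ne_zero _) p.property.1⟩

/-- Any logarithm of `p.val.2` gives the same Hopf class as the principal one. -/
lemma key (α' c : ℂ) (p : CEStotal n) (hc : Complex.exp c = p.val.2) :
    Quot.mk (hopfRel n (Complex.exp (2 * (π : ℂ) * Complex.I * α')))
      (⟨Complex.exp (-(α' * c)) • p.val.1,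
        smul_ne_zero (Complex.exp_ne_zero _) p.property.1⟩ : HopfTotal n) =
    Quot.mk _ (gFun α' Complex.log p) := by
  have hw : Complex.exp (Complex.log p.val.2) = p.val.2 := Complex.exp_log p.property.2
  rw [← hw] at hc
  obtain ⟨k, hk⟩ := Complex.exp_eq_exp_iff_exists_int.mp hc
  apply Quot.sound
  refine ⟨k, ?_⟩
  show Complex.exp (-(α' * Complex.log p.val.2)) • p.val.1
      = (Complex.exp (2 * (π : ℂ) * Complex.I * α') ^ k) •
        (Complex.exp (-(α' * c)) • p.val.1)
  rw [smul_smul]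
  congr 1
  rw [← Complex.exp_int_mul, ← Complex.exp_add]
  refine congrArg Complex.exp ?_
  rw [hk]; ring

/-- The forward map respects the relation. -/
lemma f_resp (α' : ℂ) (z w : HopfTotal n)
    (h : hopfRel n (Complex.exp (2 * (π : ℂ) * Complex.I * α')) z w) :
    Quot.mk (CESrel n α') ⟨(z.val, 1), z.property, one_ne_zero⟩ =
    Quot.mk (CESrel n α') ⟨(w.val, 1), w.property, one_ne_zero⟩ := by
  obtain ⟨k, hk⟩ := h
  apply Quot.sound
  refine ⟨(k : ℂ), ?_, ?_⟩
  · show w.val = Complex.exp (2 * (π : ℂ) * Complex.I * α' * k) • z.val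
    rw [hk]
    congr 1
    rw [← Complex.exp_int_mul]
    exact congrArg Complex.exp (by ring)
  · show (1 : ℂ) = Complex.exp (2 * (π : ℂ) * Complex.I * (k : ℂ)) * 1
    rw [mul_one, show (2 * (π : ℂ) * Complex.I * (k : ℂ)) = (k : ℂ) * (2 * π * Complex.I) by ring,
      Complex.exp_int_mul, Complex.exp_two_pi_mul_I, one_zpow]

/-- The inverse representative map respects the relation. -/
lemma g_resp (α' : ℂ) (p q : CEStotal n) (h : CESrel n α' p q) :
    Quot.mk (hopfRel n (Complex.exp (2 * (π : ℂ) * Complex.I * α')))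
      (gFun α' Complex.log p) =
    Quot.mk (hopfRel n (Complex.exp (2 * (π : ℂ) * Complex.I * α')))
      (gFun α' Complex.log q) := by
  obtain ⟨t, h1, h2⟩ := h
  have hc : Complex.exp (2 * (π : ℂ) * Complex.I * t + Complex.log p.val.2) = q.val.2 := by
    rw [Complex.exp_add, Complex.exp_log p.property.2, h2]
  rw [← key α' _ q hc]
  refine congrArg _ (Subtype.ext ?_)
  show Complex.exp (-(α' * Complex.log p.val.2)) • p.val.1
      = Complex.exp (-(α' * (2 * (π : ℂ) * Complex.I * t + Complex.log p.val.2))) • q.val.1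
  rw [h1, smul_smul, ← Complex.exp_add]
  exact congrArg (· • p.val.1) (congrArg Complex.exp (by ring)).symm

end HopfCEAux

/-- Let `n ≥ 1`, `α̃ ∈ ℂ ∖ ℝ`, and `α = e^{2π√−1 α̃}`. The map sending the
class of `z` to the class of `(z, 1)` is a well-defined homeomorphism from the Hopf manifold
`(ℂⁿ ∖ {0})/ℤ` (quotient by `k · z = α^k z`) onto the quotient `((ℂⁿ ∖ {0}) × ℂ^*)/ℂ`
(quotient by `t · (z, w) = (e^{2π√−1 α̃ t} z, e^{2π√−1 t} w)`). -/
theorem hopf_is_calabiEckmann {n : ℕ} (hn : 0 < n)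
    (α' : ℂ) (hα' : α' ∉ Set.range ((↑) : ℝ → ℂ)) :
    ∃ F : Quot (hopfRel n (Complex.exp (2 * (π : ℂ) * Complex.I * α'))) ≃ₜ
        Quot (CESrel n α'),
      ∀ z : HopfTotal n,
        F (Quot.mk _ z) = Quot.mk _ ⟨(z.val, 1), z.property, one_ne_zero⟩ := by
  classical
  set α : ℂ := Complex.exp (2 * (π : ℂ) * Complex.I * α') with hα
  -- forward representative map
  set f : HopfTotal n → Quot (CESrel n α') :=
    fun z => Quot.mk _ ⟨(z.val, 1), z.property, one_ne_zero⟩ with hf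
  -- inverse representative map
  set g : CEStotal n → Quot (hopfRel n α) :=
    fun p => Quot.mk _ (HopfCEAux.gFun α' Complex.log p) with hg
  have hg_cont : Continuous g := by
    rw [continuous_iff_continuousAt]
    intro p
    by_cases hp : p.val.2 ∈ Complex.slitPlane
    · have hbase : ContinuousAt
          (fun q : CEStotal n => Complex.exp (-(α' * Complex.log q.val.2)) • q.val.1) p := by
        have hl : ContinuousAt (fun q : CEStotal n => q.val.2) p :=
          (continuous_snd.comp continuous_subtype_val).continuousAt
        have h2 : ContinuousAt (fun q : CEStotal n => Complex.log q.val.2) p :=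
          hl.clog hp
        have h3 : ContinuousAt
            (fun q : CEStotal n => Complex.exp (-(α' * Complex.log q.val.2))) p :=
          Complex.continuous_exp.continuousAt.comp ((h2.const_mul α').neg)
        exact h3.smul ((continuous_fst.comp continuous_subtype_val).continuousAt)
      exact (continuous_quot_mk.continuousAt).comp (hbase.codRestrict _)
    · -- use the branch `w ↦ log (-w) + π I`
      have hrepr : g = fun q : CEStotal n =>
          Quot.mk (hopfRel n α)
            (⟨Complex.exp (-(α' * (Complex.log (-q.val.2) + (π : ℂ) * Complex.I))) • q.val.1,
              smul_ne_zero (Complex.exp_ne_zero _) q.property.1⟩ : HopfTotal n) := by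
        funext q
        have hc : Complex.exp (Complex.log (-q.val.2) + (π : ℂ) * Complex.I) = q.val.2 := by
          rw [Complex.exp_add, Complex.exp_log (neg_ne_zero.mpr q.property.2),
            Complex.exp_pi_mul_I]
          ring
        exact (HopfCEAux.key α' _ q hc).symm
      rw [hrepr]
      have hmem : -p.val.2 ∈ Complex.slitPlane := by
        rcases Complex.mem_slitPlane_iff.mpr.mt hp |> not_or.mp with ⟨h1, h2⟩
        push_neg at h1 h2
        rw [Complex.mem_slitPlane_iff]
        left
        simp only [Complex.neg_re, neg_pos]
        rcases lt_or_eq_of_le h1 with h | h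
        · exact h
        · exact absurd (Complex.ext h (by simpa using h2)) p.property.2
      have hbase : ContinuousAt
          (fun q : CEStotal n =>
            Complex.exp (-(α' * (Complex.log (-q.val.2) + (π : ℂ) * Complex.I))) • q.val.1) p := by
        have hl : ContinuousAt (fun q : CEStotal n => -q.val.2) p :=
          ((continuous_snd.comp continuous_subtype_val).neg).continuousAt
        have h2 : ContinuousAt (fun q : CEStotal n => Complex.log (-q.val.2)) p :=
          hl.clog hmem
        have h3 : ContinuousAt
            (fun q : CEStotal n =>
              Complex.exp (-(α' * (Complex.log (-q.val.2) + (π : ℂ) * Complex.I)))) p :=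
          Complex.continuous_exp.continuousAt.comp
            (((h2.add continuousAt_const).const_mul α').neg)
        exact h3.smul ((continuous_fst.comp continuous_subtype_val).continuousAt)
      exact (continuous_quot_mk.continuousAt).comp (hbase.codRestrict _)
  have hf_cont : Continuous f := by
    apply continuous_quot_mk.comp
    apply Continuous.subtype_mk
    exact continuous_subtype_val.prodMk continuous_const
  refine ⟨⟨⟨Quot.lift f (HopfCEAux.f_resp α'),
      Quot.lift g (HopfCEAux.g_resp α'), ?_, ?_⟩, ?_, ?_⟩, fun z => rfl⟩
  · -- left inverse
    intro x
    induction x using Quot.ind with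
    | _ z =>
      show Quot.mk (hopfRel n α)
          (HopfCEAux.gFun α' Complex.log ⟨(z.val, 1), z.property, one_ne_zero⟩) = Quot.mk _ z
      refine congrArg (Quot.mk _) (Subtype.ext ?_)
      show Complex.exp (-(α' * Complex.log 1)) • z.val = z.val
      rw [Complex.log_one, mul_zero, neg_zero, Complex.exp_zero, one_smul]
  · -- right inverse
    intro x
    induction x using Quot.ind with
    | _ p =>
      show Quot.mk _ (⟨((HopfCEAux.gFun α' Complex.log p).val, 1),
            (HopfCEAux.gFun α' Complex.log p).property, one_ne_zero⟩ : CEStotal n)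
          = Quot.mk _ p
      apply Quot.sound
      have hc2 : (2 * (π : ℂ) * Complex.I) ≠ 0 := by
        simp [Complex.I_ne_zero, Real.pi_ne_zero, Complex.ofReal_ne_zero]
      refine ⟨Complex.log p.val.2 / (2 * (π : ℂ) * Complex.I), ?_, ?_⟩
      · show p.val.1 = Complex.exp (2 * (π : ℂ) * Complex.I * α' *
            (Complex.log p.val.2 / (2 * (π : ℂ) * Complex.I))) •
            (Complex.exp (-(α' * Complex.log p.val.2)) • p.val.1)
        rw [smul_smul, ← Complex.exp_add,
          show 2 * (π : ℂ) * Complex.I * α' * (Complex.log p.val.2 / (2 * (π : ℂ) * Complex.I))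
              + -(α' * Complex.log p.val.2) = 0 by field_simp; ring,
          Complex.exp_zero, one_smul]
      · show p.val.2 = Complex.exp (2 * (π : ℂ) * Complex.I *
            (Complex.log p.val.2 / (2 * (π : ℂ) * Complex.I))) * 1
        rw [mul_one, mul_div_cancel₀ _ hc2, Complex.exp_log p.property.2]
  · exact continuous_quot_lift _ hf_cont
  · exact continuous_quot_lift _ hg_cont
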